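/- For the 8-stage method of eq. (3), the symmetric matrix M with m_{ij} = b_i a_{ij} + b_j a_{ji} - b_i b_j satisfies M Φ = 0 for Φ ∈ {𝟙, c, c², Ac}, hence every condition Φ(t₁)ᵀ M Φ(t₂) = 0 with |t₁| + |t₂| ≤ 8 holds and the method is pseudo-symplectic of order (4, 8). -/

import Mathlib

open Matrix

noncomputable def c₂ : ℝ := 1/2 - Real.sin (2*Real.pi/9) / Real.sqrt 3
noncomputable def c₃ : ℝ := 1/2 - Real.sin (Real.pi/9) / Real.sqrt 3

noncomputable def c8 : Fin 8 → ℝ := ![0, c₂, c₃, 1/2, 1/2, 1-c₃, 1-c₂, 1]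

noncomputable def b8 : Fin 8 → ℝ :=
  ![c₂/2, c₃/2, 1/4-c₂, 0, 1/2+c₂-c₃, 1/4-c₂, c₃/2, c₂/2]

noncomputable def A8 : Matrix (Fin 8) (Fin 8) ℝ :=
  !![0,        0,           0,          0,        0,           0,        0,   0;
     c₂,       0,           0,          0,        0,           0,        0,   0;
     0,        c₃,          0,          0,        0,           0,        0,   0;
     1/2-c₂,   c₂+c₃-1,     1-c₃,       0,        0,           0,        0,   0;
     2*c₂*c₃,  (1-2*c₃)*c₃, (1-4*c₂)*c₃, 4*c₂*c₃, 0,           0,        0,   0;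
     0,        c₃,          0,          4*c₂-2,   1/(2*c₂)-2,  0,        0,   0;
     c₂,       0,           1/2-2*c₂,   2-4*c₂,   6*c₂-2,      1/2-2*c₂, 0,   0;
     0,        c₃,          0,          4*c₂-2,   1/(2*c₂)-2,  0,        c₃,  0]

noncomputable def M8 : Matrix (Fin 8) (Fin 8) ℝ :=
  fun i j => b8 i * A8 i j + b8 j * A8 j i - b8 i * b8 j

inductive RTree where
  | node : List RTree → RTree

/-- Number of vertices of a rooted tree. -/
def RTree.order : RTree → ℕ
  | .node ts => 1 + (ts.attach.map fun t => RTree.order t.1).sum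
decreasing_by simp only [RTree.node.sizeOf_spec]; have := List.sizeOf_lt_of_mem t.2; omega

/-- Derivative weights of the method for a rooted tree. -/
noncomputable def RTree.phi : RTree → (Fin 8 → ℝ)
  | .node ts => fun i => (ts.attach.map fun t => A8.mulVec (RTree.phi t.1) i).prod
decreasing_by simp only [RTree.node.sizeOf_spec]; have := List.sizeOf_lt_of_mem t.2; omega

/-! ### Algebraic prerequisites on `c₂`, `c₃` -/

lemma s3 : Real.sqrt 3 ^ 2 = 3 := Real.sq_sqrt (by norm_num)
lemma s3ne : Real.sqrt 3 ≠ 0 := by positivity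

lemma ha3 : Real.sin (Real.pi/9) = Real.sqrt 3 * (1/2 - c₃) := by
  rw [c₃]; field_simp; ring

lemma hb3 : Real.sin (2*Real.pi/9) = Real.sqrt 3 * (1/2 - c₂) := by
  rw [c₂]; field_simp; ring

lemma haq : 4*Real.sin (Real.pi/9)^3 - 3*Real.sin (Real.pi/9) + Real.sqrt 3/2 = 0 := by
  have h := Real.sin_three_mul (Real.pi/9)
  rw [show 3*(Real.pi/9) = Real.pi/3 by ring, Real.sin_pi_div_three] at h
  linarith

lemma hbq : 4*Real.sin (2*Real.pi/9)^3 - 3*Real.sin (2*Real.pi/9) + Real.sqrt 3/2 = 0 := by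
  have h := Real.sin_three_mul (2*Real.pi/9)
  rw [show 3*(2*Real.pi/9) = Real.pi - Real.pi/3 by ring, Real.sin_pi_sub,
    Real.sin_pi_div_three] at h
  linarith

lemma hlt : Real.sin (Real.pi/9) < Real.sin (2*Real.pi/9) := by
  apply Real.strictMonoOn_sin ⟨?_,?_⟩ ⟨?_,?_⟩ ?_ <;> nlinarith [Real.pi_pos, Real.pi_le_four]

lemma hsum : Real.sin (Real.pi/9)^2 + Real.sin (Real.pi/9)*Real.sin (2*Real.pi/9)
    + Real.sin (2*Real.pi/9)^2 = 3/4 := by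
  have h : (Real.sin (2*Real.pi/9) - Real.sin (Real.pi/9)) *
      (3 - 4*(Real.sin (Real.pi/9)^2 + Real.sin (Real.pi/9)*Real.sin (2*Real.pi/9)
        + Real.sin (2*Real.pi/9)^2)) = 0 := by linear_combination haq - hbq
  rcases mul_eq_zero.1 h with h' | h'
  · nlinarith [hlt]
  · linarith

lemma hc3q : 24*c₃^3 - 36*c₃^2 + 12*c₃ - 1 = 0 := by
  have haq2 := haq; rw [ha3] at haq2
  have h : Real.sqrt 3 * (24*c₃^3 - 36*c₃^2 + 12*c₃ - 1) = 0 := by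
    linear_combination (-2)*haq2 + (Real.sqrt 3*(1-6*c₃+12*c₃^2-8*c₃^3))*s3
  rcases mul_eq_zero.1 h with h' | h'
  · exact absurd h' s3ne
  · exact h'

lemma hp : c₂^2 + c₂*c₃ + c₃^2 - (3/2)*c₂ - (3/2)*c₃ + 1/2 = 0 := by
  have h2 := hsum; rw [ha3, hb3] at h2
  have h : (3:ℝ) * (c₂^2 + c₂*c₃ + c₃^2 - (3/2)*c₂ - (3/2)*c₃ + 1/2) = 0 := by
    linear_combination h2 - (c₂^2 + c₂*c₃ + c₃^2 - (3/2)*c₂ - (3/2)*c₃ + 1/2 + 1/4)*s3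
  linarith

lemma hc2 : 24*c₂^3 - 36*c₂^2 + 12*c₂ - 1 = 0 := by
  linear_combination hc3q + (24*(c₂-c₃))*hp

lemma key : Real.sin (2*Real.pi/9) - Real.sin (Real.pi/9)
    = Real.sqrt 3 * (1 - 2*Real.sin (2*Real.pi/9)^2) := by
  have h1 : Real.sin (2*Real.pi/9) - Real.sin (Real.pi/9)
      = 2 * Real.cos (Real.pi/6) * Real.sin (Real.pi/18) := by
    rw [show (2*Real.pi/9) = Real.pi/6 + Real.pi/18 by ring,
      show (Real.pi/9) = Real.pi/6 - Real.pi/18 by ring, Real.sin_add, Real.sin_sub]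
    ring
  have h2 : Real.cos (2*(2*Real.pi/9)) = 1 - 2*Real.sin (2*Real.pi/9)^2 := by
    nlinarith [Real.sin_sq_add_cos_sq (2*Real.pi/9), Real.cos_two_mul (2*Real.pi/9)]
  have h3 : Real.cos (2*(2*Real.pi/9)) = Real.sin (Real.pi/18) := by
    rw [← Real.sin_pi_div_two_sub]; congr 1; ring
  rw [h1, ← h3, h2, Real.cos_pi_div_six]; ring

lemma hr : 6*c₂^2 - 7*c₂ + c₃ + 1/2 = 0 := by
  have k := key; rw [ha3, hb3] at k
  have h : Real.sqrt 3 * (6*c₂^2 - 7*c₂ + c₃ + 1/2) = 0 := by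
    linear_combination k + (-2*Real.sqrt 3*(1/2-c₂)^2) * s3
  rcases mul_eq_zero.1 h with h' | h'
  · exact absurd h' s3ne
  · exact h'

lemma c2pos : 0 < c₂ := by
  rw [c₂]
  have h1 : Real.sin (2*Real.pi/9) < Real.sin (Real.pi/3) := by
    apply Real.strictMonoOn_sin ⟨?_,?_⟩ ⟨?_,?_⟩ ?_ <;> nlinarith [Real.pi_pos, Real.pi_le_four]
  rw [Real.sin_pi_div_three] at h1
  have h3 : (0:ℝ) < Real.sqrt 3 := Real.sqrt_pos.2 (by norm_num)
  rw [sub_pos, div_lt_iff₀ h3]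
  nlinarith

lemma hinv : (1:ℝ)/(2*c₂) = 12*c₂^2 - 18*c₂ + 6 := by
  have h : c₂ ≠ 0 := ne_of_gt c2pos
  field_simp
  linear_combination (-1)*hc2

/-! ### Vector-literal evaluation helpers -/

@[simp] lemma cons_val_five {α : Type*} {m : ℕ} (x : α) (u : Fin (m+5) → α) :
    vecCons x u 5 = vecHead (vecTail (vecTail (vecTail (vecTail u)))) := rfl
@[simp] lemma cons_val_six {α : Type*} {m : ℕ} (x : α) (u : Fin (m+6) → α) :
    vecCons x u 6 = vecHead (vecTail (vecTail (vecTail (vecTail (vecTail u))))) := rfl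
@[simp] lemma cons_val_seven {α : Type*} {m : ℕ} (x : α) (u : Fin (m+7) → α) :
    vecCons x u 7 = vecHead (vecTail (vecTail (vecTail (vecTail (vecTail (vecTail u)))))) := rfl

/-- `A8` with the entry `1/(2*c₂) - 2` written polynomially. -/
noncomputable def A8' : Matrix (Fin 8) (Fin 8) ℝ :=
  !![0,        0,           0,          0,        0,           0,        0,   0;
     c₂,       0,           0,          0,        0,           0,        0,   0;
     0,        c₃,          0,          0,        0,           0,        0,   0;
     1/2-c₂,   c₂+c₃-1,     1-c₃,       0,        0,           0,        0,   0;
     2*c₂*c₃,  (1-2*c₃)*c₃, (1-4*c₂)*c₃, 4*c₂*c₃, 0,           0,        0,   0;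
     0,        c₃,          0,          4*c₂-2,   12*c₂^2-18*c₂+4,  0,        0,   0;
     c₂,       0,           1/2-2*c₂,   2-4*c₂,   6*c₂-2,      1/2-2*c₂, 0,   0;
     0,        c₃,          0,          4*c₂-2,   12*c₂^2-18*c₂+4,  0,        c₃,  0]

lemma hA8 : A8 = A8' := by
  have h : (1:ℝ)/(2*c₂) - 2 = 12*c₂^2 - 18*c₂ + 4 := by rw [hinv]; ring
  rw [A8, A8', h]

/-! ### The special vectors -/

noncomputable def E3a : Fin 8 → ℝ := fun i => (c8 i)^2
noncomputable def E3b : Fin 8 → ℝ := A8.mulVec c8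
noncomputable def E4a : Fin 8 → ℝ := fun i => (c8 i)^3
noncomputable def E4b : Fin 8 → ℝ := fun i => c8 i * A8.mulVec c8 i
noncomputable def E4c : Fin 8 → ℝ := A8.mulVec E3a
noncomputable def E4d : Fin 8 → ℝ := A8.mulVec E3b


lemma hA1 : A8.mulVec (fun _ => 1) = c8 := by
  rw [hA8]
  funext i
  fin_cases i
  · simp [A8', c8, Matrix.mulVec, dotProduct, Fin.sum_univ_eight]
    all_goals linear_combination (0:ℝ)*hr
  · simp [A8', c8, Matrix.mulVec, dotProduct, Fin.sum_univ_eight]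
    all_goals linear_combination (0:ℝ)*hr
  · simp [A8', c8, Matrix.mulVec, dotProduct, Fin.sum_univ_eight]
    all_goals linear_combination (0:ℝ)*hr
  · simp [A8', c8, Matrix.mulVec, dotProduct, Fin.sum_univ_eight]
    all_goals linear_combination (0:ℝ)*hr
  · simp [A8', c8, Matrix.mulVec, dotProduct, Fin.sum_univ_eight]
    all_goals linear_combination (3 + -2*c₃ + -12*c₂ + 12*c₂^2)*hr + (2 + -3*c₂)*hc2
  · simp [A8', c8, Matrix.mulVec, dotProduct, Fin.sum_univ_eight]
    all_goals linear_combination (2)*hr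
  · simp [A8', c8, Matrix.mulVec, dotProduct, Fin.sum_univ_eight]
    all_goals linear_combination (0:ℝ)*hr
  · simp [A8', c8, Matrix.mulVec, dotProduct, Fin.sum_univ_eight]
    all_goals linear_combination (2)*hr

lemma hc8v : c8 = ![(0:ℝ), (c₂), ((-1/2) + 7*c₂ + -6*c₂^2), ((1/2)), ((1/2)), ((3/2) + -7*c₂ + 6*c₂^2), (1 + -1*c₂), (1)] := by
  funext i
  fin_cases i
  · simp [c8]
    all_goals linear_combination (0:ℝ)*hr
  · simp [c8]
    all_goals linear_combination (0:ℝ)*hr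
  · simp [c8]
    all_goals linear_combination (1)*hr
  · simp [c8]
    all_goals linear_combination (0:ℝ)*hr
  · simp [c8]
    all_goals linear_combination (0:ℝ)*hr
  · simp [c8]
    all_goals linear_combination (-1)*hr
  · simp [c8]
    all_goals linear_combination (0:ℝ)*hr
  · simp [c8]
    all_goals linear_combination (0:ℝ)*hr

lemma hE3av : E3a = ![(0:ℝ), (c₂^2), (-1 + (19/2)*c₂ + -8*c₂^2), ((1/4)), ((1/4)), (1 + (-9/2)*c₂ + 4*c₂^2), (1 + -2*c₂ + c₂^2), (1)] := by
  funext i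
  fin_cases i
  · simp [E3a, c8]
    all_goals linear_combination (0:ℝ)*hr
  · simp [E3a, c8]
    all_goals linear_combination (0:ℝ)*hr
  · simp [E3a, c8]
    all_goals linear_combination ((-1/2) + c₃ + 7*c₂ + -6*c₂^2)*hr + ((-5/4) + (3/2)*c₂)*hc2
  · simp [E3a, c8]
    all_goals linear_combination (0:ℝ)*hr
  · simp [E3a, c8]
    all_goals linear_combination (0:ℝ)*hr
  · simp [E3a, c8]
    all_goals linear_combination ((-5/2) + c₃ + 7*c₂ + -6*c₂^2)*hr + ((-5/4) + (3/2)*c₂)*hc2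
  · simp [E3a, c8]
    all_goals linear_combination (0:ℝ)*hr
  · simp [E3a, c8]
    all_goals linear_combination (0:ℝ)*hr

lemma hE4av : E4a = ![(0:ℝ), ((1/24) + (-1/2)*c₂ + (3/2)*c₂^2), ((-29/24) + (43/4)*c₂ + -9*c₂^2), ((1/8)), ((1/8)), ((17/24) + (-13/4)*c₂ + 3*c₂^2), ((23/24) + (-5/2)*c₂ + (3/2)*c₂^2), (1)] := by
  funext i
  fin_cases i
  · simp [E4a, c8]
    all_goals linear_combination (0:ℝ)*hr
  · simp [E4a, c8]
    all_goals linear_combination ((1/24))*hc2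
  · simp [E4a, c8]
    all_goals linear_combination ((1/4) + (-1/2)*c₃ + c₃^2 + -7*c₂ + 7*c₂*c₃ + 55*c₂^2 + -6*c₂^2*c₃ + -84*c₂^3 + 36*c₂^4)*hr + ((-13/12) + (-15/2)*c₂ + 18*c₂^2 + -9*c₂^3)*hc2
  · simp [E4a, c8]
    all_goals linear_combination (0:ℝ)*hr
  · simp [E4a, c8]
    all_goals linear_combination (0:ℝ)*hr
  · simp [E4a, c8]
    all_goals linear_combination ((-19/4) + (7/2)*c₃ + -1*c₃^2 + 28*c₂ + -7*c₂*c₃ + -73*c₂^2 + 6*c₂^2*c₃ + 84*c₂^3 + -36*c₂^4)*hr + ((-8/3) + 12*c₂ + -18*c₂^2 + 9*c₂^3)*hc2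
  · simp [E4a, c8]
    all_goals linear_combination ((-1/24))*hc2
  · simp [E4a, c8]
    all_goals linear_combination (0:ℝ)*hr

lemma hE3bv : E3b = ![(0:ℝ), (0:ℝ), ((-1/4) + (5/2)*c₂ + -2*c₂^2), ((1/4) + -1*c₂ + c₂^2), ((1/4) + -1*c₂ + c₂^2), ((3/4) + (-9/2)*c₂ + 4*c₂^2), ((1/2) + -1*c₂), ((1/2))] := by
  rw [E3b, hA8, hc8v]
  funext i
  fin_cases i
  · simp [A8', Matrix.mulVec, dotProduct, Fin.sum_univ_eight]
    all_goals linear_combination (0:ℝ)*hr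
  · simp [A8', Matrix.mulVec, dotProduct, Fin.sum_univ_eight]
    all_goals linear_combination (0:ℝ)*hr
  · simp [A8', Matrix.mulVec, dotProduct, Fin.sum_univ_eight]
    all_goals linear_combination (c₂)*hr + ((-1/4))*hc2
  · simp [A8', Matrix.mulVec, dotProduct, Fin.sum_univ_eight]
    all_goals linear_combination ((1/2) + -6*c₂ + 6*c₂^2)*hr + (1 + (-3/2)*c₂)*hc2
  · simp [A8', Matrix.mulVec, dotProduct, Fin.sum_univ_eight]
    all_goals linear_combination ((-1/2) + 13*c₂ + -2*c₂*c₃ + -48*c₂^2 + 36*c₂^3)*hr + (9*c₂ + -9*c₂^2)*hc2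
  · simp [A8', Matrix.mulVec, dotProduct, Fin.sum_univ_eight]
    all_goals linear_combination (c₂)*hr + ((-1/4))*hc2
  · simp [A8', Matrix.mulVec, dotProduct, Fin.sum_univ_eight]
    all_goals linear_combination (0:ℝ)*hr
  · simp [A8', Matrix.mulVec, dotProduct, Fin.sum_univ_eight]
    all_goals linear_combination (1)*hr

lemma hE4bv : E4b = ![(0:ℝ), (0:ℝ), ((-1/3) + 3*c₂ + (-5/2)*c₂^2), ((1/8) + (-1/2)*c₂ + (1/2)*c₂^2), ((1/8) + (-1/2)*c₂ + (1/2)*c₂^2), ((1/3) + (-3/2)*c₂ + (3/2)*c₂^2), ((1/2) + (-3/2)*c₂ + c₂^2), ((1/2))] := by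
  rw [show E4b = fun i => c8 i * E3b i from rfl, hc8v, hE3bv]
  funext i
  fin_cases i
  · simp [dotProduct, Fin.sum_univ_eight]
    all_goals linear_combination (0:ℝ)*hr
  · simp [dotProduct, Fin.sum_univ_eight]
    all_goals linear_combination (0:ℝ)*hr
  · simp [dotProduct, Fin.sum_univ_eight]
    all_goals linear_combination ((-11/24) + (1/2)*c₂)*hc2
  · simp [dotProduct, Fin.sum_univ_eight]
    all_goals linear_combination (0:ℝ)*hr
  · simp [dotProduct, Fin.sum_univ_eight]
    all_goals linear_combination (0:ℝ)*hr
  · simp [dotProduct, Fin.sum_univ_eight]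
    all_goals linear_combination ((-19/24) + c₂)*hc2
  · simp [dotProduct, Fin.sum_univ_eight]
    all_goals linear_combination (0:ℝ)*hr
  · simp [dotProduct, Fin.sum_univ_eight]
    all_goals linear_combination (0:ℝ)*hr

lemma hE4cv : E4c = ![(0:ℝ), (0:ℝ), ((-1/12) + (3/4)*c₂ + (-1/2)*c₂^2), ((1/6) + -1*c₂ + c₂^2), ((1/6) + -1*c₂ + c₂^2), ((5/12) + (-11/4)*c₂ + (5/2)*c₂^2), ((1/3) + -1*c₂), ((1/3))] := by
  rw [E4c, hA8, hE3av]
  funext i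
  fin_cases i
  · simp [A8', Matrix.mulVec, dotProduct, Fin.sum_univ_eight]
    all_goals linear_combination (0:ℝ)*hr
  · simp [A8', Matrix.mulVec, dotProduct, Fin.sum_univ_eight]
    all_goals linear_combination (0:ℝ)*hr
  · simp [A8', Matrix.mulVec, dotProduct, Fin.sum_univ_eight]
    all_goals linear_combination (c₂^2)*hr + ((-1/12) + (-1/4)*c₂)*hc2
  · simp [A8', Matrix.mulVec, dotProduct, Fin.sum_univ_eight]
    all_goals linear_combination (1 + (-19/2)*c₂ + 9*c₂^2)*hr + ((5/3) + (-9/4)*c₂)*hc2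
  · simp [A8', Matrix.mulVec, dotProduct, Fin.sum_univ_eight]
    all_goals linear_combination (-1 + (29/2)*c₂ + -44*c₂^2 + -2*c₂^2*c₃ + 18*c₂^3 + 12*c₂^4)*hr + ((-1/3) + (37/4)*c₂ + (-11/2)*c₂^2 + -3*c₂^3)*hc2
  · simp [A8', Matrix.mulVec, dotProduct, Fin.sum_univ_eight]
    all_goals linear_combination (c₂^2)*hr + ((-1/12) + (-1/4)*c₂)*hc2
  · simp [A8', Matrix.mulVec, dotProduct, Fin.sum_univ_eight]
    all_goals linear_combination ((1/3))*hc2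
  · simp [A8', Matrix.mulVec, dotProduct, Fin.sum_univ_eight]
    all_goals linear_combination (1 + -2*c₂ + 2*c₂^2)*hr + ((1/3) + (-1/2)*c₂)*hc2

lemma hE4dv : E4d = ![(0:ℝ), (0:ℝ), (0:ℝ), ((1/12) + (-1/2)*c₂ + (1/2)*c₂^2), ((1/12) + (-1/2)*c₂ + (1/2)*c₂^2), ((1/6) + -1*c₂ + c₂^2), ((1/6) + (-1/2)*c₂), ((1/6))] := by
  rw [E4d, hA8, hE3bv]
  funext i
  fin_cases i
  · simp [A8', Matrix.mulVec, dotProduct, Fin.sum_univ_eight]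
    all_goals linear_combination (0:ℝ)*hr
  · simp [A8', Matrix.mulVec, dotProduct, Fin.sum_univ_eight]
    all_goals linear_combination (0:ℝ)*hr
  · simp [A8', Matrix.mulVec, dotProduct, Fin.sum_univ_eight]
    all_goals linear_combination (0:ℝ)*hr
  · simp [A8', Matrix.mulVec, dotProduct, Fin.sum_univ_eight]
    all_goals linear_combination ((1/4) + (-5/2)*c₂ + 2*c₂^2)*hr + ((11/24) + (-1/2)*c₂)*hc2
  · simp [A8', Matrix.mulVec, dotProduct, Fin.sum_univ_eight]
    all_goals linear_combination ((-1/4) + (9/2)*c₂ + -16*c₂^2 + 12*c₂^3)*hr + ((-1/24) + 3*c₂ + -3*c₂^2)*hc2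
  · simp [A8', Matrix.mulVec, dotProduct, Fin.sum_univ_eight]
    all_goals linear_combination ((-1/3) + (1/2)*c₂)*hc2
  · simp [A8', Matrix.mulVec, dotProduct, Fin.sum_univ_eight]
    all_goals linear_combination ((-1/12))*hc2
  · simp [A8', Matrix.mulVec, dotProduct, Fin.sum_univ_eight]
    all_goals linear_combination ((1/2) + -1*c₂)*hr + ((-1/12) + (1/2)*c₂)*hc2

lemma hM1 : M8.mulVec (fun _ => 1) = 0 := by
  funext i
  fin_cases i
  · simp [M8, hA8, A8', b8, Matrix.mulVec, dotProduct, Fin.sum_univ_eight]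
    all_goals linear_combination (3*c₂ + -2*c₂*c₃ + -12*c₂^2 + 12*c₂^3)*hr + (2*c₂ + -3*c₂^2)*hc2
  · simp [M8, hA8, A8', b8, Matrix.mulVec, dotProduct, Fin.sum_univ_eight]
    all_goals linear_combination (2 + -3*c₃ + 2*c₃^2 + -27*c₂ + 12*c₂*c₃ + 108*c₂^2 + -12*c₂^2*c₃ + -156*c₂^3 + 72*c₂^4)*hr + (1 + (-31/2)*c₂ + 33*c₂^2 + -18*c₂^3)*hc2
  · simp [M8, hA8, A8', b8, Matrix.mulVec, dotProduct, Fin.sum_univ_eight]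
    all_goals linear_combination ((3/2) + -1*c₃ + -12*c₂ + 4*c₂*c₃ + 30*c₂^2 + -24*c₂^3)*hr + (1 + (-11/2)*c₂ + 6*c₂^2)*hc2
  · simp [M8, hA8, A8', b8, Matrix.mulVec, dotProduct, Fin.sum_univ_eight]
    all_goals linear_combination (1 + 2*c₂ + -4*c₂*c₃ + -24*c₂^2 + 24*c₂^3)*hr + (1 + 4*c₂ + -6*c₂^2)*hc2
  · simp [M8, hA8, A8', b8, Matrix.mulVec, dotProduct, Fin.sum_univ_eight]
    all_goals linear_combination (3 + -4*c₃ + 2*c₃^2 + -27*c₂ + 10*c₂*c₃ + 102*c₂^2 + -12*c₂^2*c₃ + -144*c₂^3 + 72*c₂^4)*hr + (1 + -15*c₂ + 30*c₂^2 + -18*c₂^3)*hc2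
  · simp [M8, hA8, A8', b8, Matrix.mulVec, dotProduct, Fin.sum_univ_eight]
    all_goals linear_combination ((1/2) + -2*c₂)*hr
  · simp [M8, hA8, A8', b8, Matrix.mulVec, dotProduct, Fin.sum_univ_eight]
    all_goals linear_combination (0:ℝ)*hr
  · simp [M8, hA8, A8', b8, Matrix.mulVec, dotProduct, Fin.sum_univ_eight]
    all_goals linear_combination (c₂)*hr

lemma hMc : M8.mulVec c8 = 0 := by
  rw [hc8v]
  funext i
  fin_cases i
  · simp [M8, hA8, A8', b8, Matrix.mulVec, dotProduct, Fin.sum_univ_eight]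
    all_goals linear_combination ((3/2)*c₂ + -1*c₂*c₃ + -6*c₂^2 + 6*c₂^3)*hr + (c₂ + (-3/2)*c₂^2)*hc2
  · simp [M8, hA8, A8', b8, Matrix.mulVec, dotProduct, Fin.sum_univ_eight]
    all_goals linear_combination (1 + (-3/2)*c₃ + c₃^2 + (-27/2)*c₂ + 6*c₂*c₃ + 54*c₂^2 + -6*c₂^2*c₃ + -78*c₂^3 + 36*c₂^4)*hr + ((1/2) + (-31/4)*c₂ + (33/2)*c₂^2 + -9*c₂^3)*hc2
  · simp [M8, hA8, A8', b8, Matrix.mulVec, dotProduct, Fin.sum_univ_eight]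
    all_goals linear_combination ((3/4) + (-1/2)*c₃ + -6*c₂ + 2*c₂*c₃ + 15*c₂^2 + -12*c₂^3)*hr + ((1/2) + (-11/4)*c₂ + 3*c₂^2)*hc2
  · simp [M8, hA8, A8', b8, Matrix.mulVec, dotProduct, Fin.sum_univ_eight]
    all_goals linear_combination (1 + -1*c₂ + -2*c₂*c₃ + -10*c₂^2 + 12*c₂^3)*hr + ((5/4) + (1/2)*c₂ + -3*c₂^2)*hc2
  · simp [M8, hA8, A8', b8, Matrix.mulVec, dotProduct, Fin.sum_univ_eight]
    all_goals linear_combination (-1 + (1/2)*c₃ + 20*c₂ + -14*c₂*c₃ + 2*c₂*c₃^2 + -132*c₂^2 + 46*c₂^2*c₃ + 402*c₂^3 + -36*c₂^3*c₃ + -504*c₂^4 + 216*c₂^5)*hr + ((-7/4) + (57/4)*c₂ + -66*c₂^2 + 108*c₂^3 + -54*c₂^4)*hc2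
  · simp [M8, hA8, A8', b8, Matrix.mulVec, dotProduct, Fin.sum_univ_eight]
    all_goals linear_combination ((1/4) + -1*c₂)*hr
  · simp [M8, hA8, A8', b8, Matrix.mulVec, dotProduct, Fin.sum_univ_eight]
    all_goals linear_combination (0:ℝ)*hr
  · simp [M8, hA8, A8', b8, Matrix.mulVec, dotProduct, Fin.sum_univ_eight]
    all_goals linear_combination ((1/2)*c₂)*hr

lemma hMc2 : M8.mulVec E3a = 0 := by
  rw [hE3av]
  funext i
  fin_cases i
  · simp [M8, hA8, A8', b8, Matrix.mulVec, dotProduct, Fin.sum_univ_eight]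
    all_goals linear_combination ((7/8)*c₂ + (-1/2)*c₂*c₃ + (-7/2)*c₂^2 + (7/2)*c₂^3)*hr + ((1/2)*c₂ + (-7/8)*c₂^2)*hc2
  · simp [M8, hA8, A8', b8, Matrix.mulVec, dotProduct, Fin.sum_univ_eight]
    all_goals linear_combination ((1/2) + (-7/8)*c₃ + (1/2)*c₃^2 + (-55/8)*c₂ + (7/2)*c₂*c₃ + (57/2)*c₂^2 + (-7/2)*c₂^2*c₃ + (-87/2)*c₂^3 + 21*c₂^4)*hr + ((1/4) + (-63/16)*c₂ + (73/8)*c₂^2 + (-21/4)*c₂^3)*hc2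
  · simp [M8, hA8, A8', b8, Matrix.mulVec, dotProduct, Fin.sum_univ_eight]
    all_goals linear_combination ((7/16) + (-1/4)*c₃ + (-7/2)*c₂ + c₂*c₃ + (35/4)*c₂^2 + -7*c₂^3)*hr + ((1/4) + (-23/16)*c₂ + (7/4)*c₂^2)*hc2
  · simp [M8, hA8, A8', b8, Matrix.mulVec, dotProduct, Fin.sum_univ_eight]
    all_goals linear_combination (1 + -3*c₂ + -1*c₂*c₃ + -1*c₂^2 + 4*c₂^3)*hr + (1 + (-3/4)*c₂ + -1*c₂^2)*hc2
  · simp [M8, hA8, A8', b8, Matrix.mulVec, dotProduct, Fin.sum_univ_eight]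
    all_goals linear_combination ((-17/8) + (5/4)*c₃ + 30*c₂ + (-31/2)*c₂*c₃ + (-317/2)*c₂^2 + 44*c₂^2*c₃ + 2*c₂^2*c₃^2 + 388*c₂^3 + -20*c₂^3*c₃ + -366*c₂^4 + -12*c₂^4*c₃ + 36*c₂^5 + 72*c₂^6)*hr + (-2 + 18*c₂ + (-277/4)*c₂^2 + 87*c₂^3 + -15*c₂^4 + -18*c₂^5)*hc2
  · simp [M8, hA8, A8', b8, Matrix.mulVec, dotProduct, Fin.sum_univ_eight]
    all_goals linear_combination ((3/16) + -1*c₂ + (5/4)*c₂^2 + -1*c₂^3)*hr + ((-1/16)*c₂ + (1/4)*c₂^2)*hc2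
  · simp [M8, hA8, A8', b8, Matrix.mulVec, dotProduct, Fin.sum_univ_eight]
    all_goals linear_combination ((-1/8)*c₃ + (-1/8)*c₂ + (1/2)*c₂*c₃ + (3/2)*c₂^2 + (-1/2)*c₂^2*c₃ + (-9/2)*c₂^3 + 3*c₂^4)*hr + ((-1/16)*c₂ + (7/8)*c₂^2 + (-3/4)*c₂^3)*hc2
  · simp [M8, hA8, A8', b8, Matrix.mulVec, dotProduct, Fin.sum_univ_eight]
    all_goals linear_combination ((3/8)*c₂ + (-1/2)*c₂^2 + (1/2)*c₂^3)*hr + ((-1/8)*c₂^2)*hc2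

lemma hMAc : M8.mulVec E3b = 0 := by
  rw [hE3bv]
  funext i
  fin_cases i
  · simp [M8, hA8, A8', b8, Matrix.mulVec, dotProduct, Fin.sum_univ_eight]
    all_goals linear_combination ((3/4)*c₂ + (-1/2)*c₂*c₃ + (-23/4)*c₂^2 + 2*c₂^2*c₃ + (35/2)*c₂^3 + -2*c₂^3*c₃ + -24*c₂^4 + 12*c₂^5)*hr + ((1/2)*c₂ + (-21/8)*c₂^2 + 5*c₂^3 + -3*c₂^4)*hc2
  · simp [M8, hA8, A8', b8, Matrix.mulVec, dotProduct, Fin.sum_univ_eight]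
    all_goals linear_combination ((1/2) + (-3/4)*c₃ + (1/2)*c₃^2 + (-69/8)*c₂ + (23/4)*c₂*c₃ + -2*c₂*c₃^2 + (109/2)*c₂^2 + (-35/2)*c₂^2*c₃ + 2*c₂^2*c₃^2 + (-339/2)*c₂^3 + 24*c₂^3*c₃ + 279*c₂^4 + -12*c₂^4*c₃ + -228*c₂^5 + 72*c₂^6)*hr + ((1/4) + (-77/16)*c₂ + (191/8)*c₂^2 + (-209/4)*c₂^3 + 51*c₂^4 + -18*c₂^5)*hc2
  · simp [M8, hA8, A8', b8, Matrix.mulVec, dotProduct, Fin.sum_univ_eight]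
    all_goals linear_combination ((3/8) + (-1/4)*c₃ + (-35/8)*c₂ + 2*c₂*c₃ + (81/4)*c₂^2 + -5*c₂^2*c₃ + -47*c₂^3 + 4*c₂^3*c₃ + 54*c₂^4 + -24*c₂^5)*hr + ((1/4) + (-37/16)*c₂ + (31/4)*c₂^2 + (-23/2)*c₂^3 + 6*c₂^4)*hc2
  · simp [M8, hA8, A8', b8, Matrix.mulVec, dotProduct, Fin.sum_univ_eight]
    all_goals linear_combination ((1/2) + -1*c₂ + -1*c₂*c₃ + -8*c₂^2 + 4*c₂^2*c₃ + 34*c₂^3 + -4*c₂^3*c₃ + -48*c₂^4 + 24*c₂^5)*hr + ((5/8) + (-1/2)*c₂ + -5*c₂^2 + 10*c₂^3 + -6*c₂^4)*hc2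
  · simp [M8, hA8, A8', b8, Matrix.mulVec, dotProduct, Fin.sum_univ_eight]
    all_goals linear_combination ((-1/2) + (1/4)*c₃ + 7*c₂ + -4*c₂*c₃ + (-83/2)*c₂^2 + 15*c₂^2*c₃ + 125*c₂^3 + -12*c₂^3*c₃ + -162*c₂^4 + 72*c₂^5)*hr + ((-7/8) + (49/8)*c₂ + (-85/4)*c₂^2 + (69/2)*c₂^3 + -18*c₂^4)*hc2
  · simp [M8, hA8, A8', b8, Matrix.mulVec, dotProduct, Fin.sum_univ_eight]
    all_goals linear_combination ((1/8) + (-7/8)*c₂ + (7/4)*c₂^2 + -1*c₂^3)*hr + ((1/16)*c₂ + (-1/4)*c₂^2)*hc2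
  · simp [M8, hA8, A8', b8, Matrix.mulVec, dotProduct, Fin.sum_univ_eight]
    all_goals linear_combination ((1/8)*c₂ + (-1/4)*c₂*c₃ + (-3/2)*c₂^2 + (1/2)*c₂^2*c₃ + (9/2)*c₂^3 + -3*c₂^4)*hr + ((1/16)*c₂ + (-7/8)*c₂^2 + (3/4)*c₂^3)*hc2
  · simp [M8, hA8, A8', b8, Matrix.mulVec, dotProduct, Fin.sum_univ_eight]
    all_goals linear_combination ((1/4)*c₂ + (-3/4)*c₂^2 + (1/2)*c₂^3)*hr + ((1/8)*c₂^2)*hc2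

lemma hMV4a : M8.mulVec E4a = ![(0:ℝ), (0:ℝ), (0:ℝ), ((1/48) + (-5/24)*c₂ + (1/4)*c₂^2), ((-1/48) + (5/24)*c₂ + (-1/4)*c₂^2), (0:ℝ), (0:ℝ), (0:ℝ)] := by
  rw [hE4av]
  funext i
  fin_cases i
  · simp [M8, hA8, A8', b8, Matrix.mulVec, dotProduct, Fin.sum_univ_eight]
    all_goals linear_combination ((9/16)*c₂ + (-1/4)*c₂*c₃ + (-9/4)*c₂^2 + (9/4)*c₂^3)*hr + ((1/4)*c₂ + (-9/16)*c₂^2)*hc2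
  · simp [M8, hA8, A8', b8, Matrix.mulVec, dotProduct, Fin.sum_univ_eight]
    all_goals linear_combination ((1/4) + (-9/16)*c₃ + (1/4)*c₃^2 + (-57/16)*c₂ + (9/4)*c₂*c₃ + (63/4)*c₂^2 + (-9/4)*c₂^2*c₃ + (-105/4)*c₂^3 + (27/2)*c₂^4)*hr + ((1/8) + (-65/32)*c₂ + (87/16)*c₂^2 + (-27/8)*c₂^3)*hc2
  · simp [M8, hA8, A8', b8, Matrix.mulVec, dotProduct, Fin.sum_univ_eight]
    all_goals linear_combination ((9/32) + (-1/8)*c₃ + (-9/4)*c₂ + (1/2)*c₂*c₃ + (45/8)*c₂^2 + (-9/2)*c₂^3)*hr + ((1/8) + (-25/32)*c₂ + (9/8)*c₂^2)*hc2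
  · simp [M8, hA8, A8', b8, Matrix.mulVec, dotProduct, Fin.sum_univ_eight]
    all_goals linear_combination ((23/24) + (-47/12)*c₂ + (-1/2)*c₂*c₃ + (7/2)*c₂^2)*hr + ((41/48) + (-11/8)*c₂)*hc2
  · simp [M8, hA8, A8', b8, Matrix.mulVec, dotProduct, Fin.sum_univ_eight]
    all_goals linear_combination ((-121/48) + (35/24)*c₃ + (1/12)*c₃^2 + (267/8)*c₂ + (-187/12)*c₂*c₃ + -1*c₂*c₃^2 + -166*c₂^2 + (85/2)*c₂^2*c₃ + 3*c₂^2*c₃^2 + (747/2)*c₂^3 + -12*c₂^3*c₃ + -294*c₂^4 + -18*c₂^4*c₃ + -54*c₂^5 + 108*c₂^6)*hr + ((-97/48) + 19*c₂ + (-277/4)*c₂^2 + (303/4)*c₂^3 + (9/2)*c₂^4 + -27*c₂^5)*hc2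
  · simp [M8, hA8, A8', b8, Matrix.mulVec, dotProduct, Fin.sum_univ_eight]
    all_goals linear_combination ((5/32) + -1*c₂ + (15/8)*c₂^2 + (-3/2)*c₂^3)*hr + ((-3/32)*c₂ + (3/8)*c₂^2)*hc2
  · simp [M8, hA8, A8', b8, Matrix.mulVec, dotProduct, Fin.sum_univ_eight]
    all_goals linear_combination ((-3/16)*c₃ + (-3/16)*c₂ + (3/4)*c₂*c₃ + (9/4)*c₂^2 + (-3/4)*c₂^2*c₃ + (-27/4)*c₂^3 + (9/2)*c₂^4)*hr + ((-3/32)*c₂ + (21/16)*c₂^2 + (-9/8)*c₂^3)*hc2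
  · simp [M8, hA8, A8', b8, Matrix.mulVec, dotProduct, Fin.sum_univ_eight]
    all_goals linear_combination ((5/16)*c₂ + (-3/4)*c₂^2 + (3/4)*c₂^3)*hr + ((-3/16)*c₂^2)*hc2

lemma hMV4b : M8.mulVec E4b = ![(0:ℝ), (0:ℝ), (0:ℝ), ((-1/12)*c₂^2), ((1/12)*c₂^2), (0:ℝ), (0:ℝ), (0:ℝ)] := by
  rw [hE4bv]
  funext i
  fin_cases i
  · simp [M8, hA8, A8', b8, Matrix.mulVec, dotProduct, Fin.sum_univ_eight]
    all_goals linear_combination ((7/16)*c₂ + (-1/4)*c₂*c₃ + (-25/8)*c₂^2 + c₂^2*c₃ + 9*c₂^3 + -1*c₂^3*c₃ + -12*c₂^4 + 6*c₂^5)*hr + ((1/4)*c₂ + (-11/8)*c₂^2 + (5/2)*c₂^3 + (-3/2)*c₂^4)*hc2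
  · simp [M8, hA8, A8', b8, Matrix.mulVec, dotProduct, Fin.sum_univ_eight]
    all_goals linear_combination ((1/4) + (-7/16)*c₃ + (1/4)*c₃^2 + (-35/8)*c₂ + (25/8)*c₂*c₃ + -1*c₂*c₃^2 + 28*c₂^2 + -9*c₂^2*c₃ + c₂^2*c₃^2 + -87*c₂^3 + 12*c₂^3*c₃ + 141*c₂^4 + -6*c₂^4*c₃ + -114*c₂^5 + 36*c₂^6)*hr + ((1/8) + (-39/16)*c₂ + (99/8)*c₂^2 + (-53/2)*c₂^3 + (51/2)*c₂^4 + -9*c₂^5)*hc2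
  · simp [M8, hA8, A8', b8, Matrix.mulVec, dotProduct, Fin.sum_univ_eight]
    all_goals linear_combination ((7/32) + (-1/8)*c₃ + (-39/16)*c₂ + c₂*c₃ + (43/4)*c₂^2 + (-5/2)*c₂^2*c₃ + -24*c₂^3 + 2*c₂^3*c₃ + 27*c₂^4 + -12*c₂^5)*hr + ((1/8) + (-19/16)*c₂ + 4*c₂^2 + (-23/4)*c₂^3 + 3*c₂^4)*hc2
  · simp [M8, hA8, A8', b8, Matrix.mulVec, dotProduct, Fin.sum_univ_eight]
    all_goals linear_combination ((1/2) + -2*c₂ + (-1/2)*c₂*c₃ + -1*c₂^2 + 2*c₂^2*c₃ + 15*c₂^3 + -2*c₂^3*c₃ + -24*c₂^4 + 12*c₂^5)*hr + ((5/12) + (-3/4)*c₂ + -2*c₂^2 + 5*c₂^3 + -3*c₂^4)*hc2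
  · simp [M8, hA8, A8', b8, Matrix.mulVec, dotProduct, Fin.sum_univ_eight]
    all_goals linear_combination ((-43/48) + (11/24)*c₃ + (34/3)*c₂ + (-61/12)*c₂*c₃ + (-229/4)*c₂^2 + (33/2)*c₂^2*c₃ + 146*c₂^3 + -12*c₂^3*c₃ + -171*c₂^4 + 72*c₂^5)*hr + ((-3/4) + (79/12)*c₂ + (-49/2)*c₂^2 + (147/4)*c₂^3 + -18*c₂^4)*hc2
  · simp [M8, hA8, A8', b8, Matrix.mulVec, dotProduct, Fin.sum_univ_eight]
    all_goals linear_combination ((3/32) + (-11/16)*c₂ + (3/2)*c₂^2 + -1*c₂^3)*hr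
  · simp [M8, hA8, A8', b8, Matrix.mulVec, dotProduct, Fin.sum_univ_eight]
    all_goals linear_combination ((-1/16)*c₃ + (1/8)*c₂*c₃)*hr
  · simp [M8, hA8, A8', b8, Matrix.mulVec, dotProduct, Fin.sum_univ_eight]
    all_goals linear_combination ((3/16)*c₂ + (-5/8)*c₂^2 + (1/2)*c₂^3)*hr

lemma hMV4c : M8.mulVec E4c = ![(0:ℝ), (0:ℝ), (0:ℝ), ((1/48) + (-5/24)*c₂ + (1/4)*c₂^2), ((-1/48) + (5/24)*c₂ + (-1/4)*c₂^2), (0:ℝ), (0:ℝ), (0:ℝ)] := by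
  rw [hE4cv]
  funext i
  fin_cases i
  · simp [M8, hA8, A8', b8, Matrix.mulVec, dotProduct, Fin.sum_univ_eight]
    all_goals linear_combination ((1/2)*c₂ + (-1/3)*c₂*c₃ + (-19/4)*c₂^2 + 2*c₂^2*c₃ + (33/2)*c₂^3 + -2*c₂^3*c₃ + -24*c₂^4 + 12*c₂^5)*hr + ((1/3)*c₂ + (-19/8)*c₂^2 + 5*c₂^3 + -3*c₂^4)*hc2
  · simp [M8, hA8, A8', b8, Matrix.mulVec, dotProduct, Fin.sum_univ_eight]
    all_goals linear_combination ((1/3) + (-1/2)*c₃ + (1/3)*c₃^2 + (-51/8)*c₂ + (19/4)*c₂*c₃ + -2*c₂*c₃^2 + (91/2)*c₂^2 + (-33/2)*c₂^2*c₃ + 2*c₂^2*c₃^2 + (-313/2)*c₂^3 + 24*c₂^3*c₃ + 273*c₂^4 + -12*c₂^4*c₃ + -228*c₂^5 + 72*c₂^6)*hr + ((1/6) + (-169/48)*c₂ + (169/8)*c₂^2 + (-203/4)*c₂^3 + 51*c₂^4 + -18*c₂^5)*hc2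
  · simp [M8, hA8, A8', b8, Matrix.mulVec, dotProduct, Fin.sum_univ_eight]
    all_goals linear_combination ((1/4) + (-1/6)*c₃ + (-27/8)*c₂ + (5/3)*c₂*c₃ + (71/4)*c₂^2 + -5*c₂^2*c₃ + -45*c₂^3 + 4*c₂^3*c₃ + 54*c₂^4 + -24*c₂^5)*hr + ((1/6) + (-89/48)*c₂ + (29/4)*c₂^2 + (-23/2)*c₂^3 + 6*c₂^4)*hc2
  · simp [M8, hA8, A8', b8, Matrix.mulVec, dotProduct, Fin.sum_univ_eight]
    all_goals linear_combination ((1/3) + -1*c₂ + (-2/3)*c₂*c₃ + -6*c₂^2 + 4*c₂^2*c₃ + 32*c₂^3 + -4*c₂^3*c₃ + -48*c₂^4 + 24*c₂^5)*hr + ((19/48) + (-7/12)*c₂ + (-9/2)*c₂^2 + 10*c₂^3 + -6*c₂^4)*hc2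
  · simp [M8, hA8, A8', b8, Matrix.mulVec, dotProduct, Fin.sum_univ_eight]
    all_goals linear_combination ((-1/4) + (1/12)*c₃ + (11/4)*c₂ + (-5/4)*c₂*c₃ + (-31/2)*c₂^2 + (13/2)*c₂^2*c₃ + (103/2)*c₂^3 + -6*c₂^3*c₃ + -75*c₂^4 + 36*c₂^5)*hr + ((-23/48) + (23/8)*c₂ + (-69/8)*c₂^2 + (63/4)*c₂^3 + -9*c₂^4)*hc2
  · simp [M8, hA8, A8', b8, Matrix.mulVec, dotProduct, Fin.sum_univ_eight]
    all_goals linear_combination ((1/12) + (-17/24)*c₂ + (7/4)*c₂^2 + -1*c₂^3)*hr + ((1/16)*c₂ + (-1/4)*c₂^2)*hc2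
  · simp [M8, hA8, A8', b8, Matrix.mulVec, dotProduct, Fin.sum_univ_eight]
    all_goals linear_combination ((1/8)*c₂ + (-1/4)*c₂*c₃ + (-3/2)*c₂^2 + (1/2)*c₂^2*c₃ + (9/2)*c₂^3 + -3*c₂^4)*hr + ((1/16)*c₂ + (-7/8)*c₂^2 + (3/4)*c₂^3)*hc2
  · simp [M8, hA8, A8', b8, Matrix.mulVec, dotProduct, Fin.sum_univ_eight]
    all_goals linear_combination ((1/6)*c₂ + (-3/4)*c₂^2 + (1/2)*c₂^3)*hr + ((1/8)*c₂^2)*hc2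

lemma hMV4d : M8.mulVec E4d = ![(0:ℝ), (0:ℝ), (0:ℝ), ((-1/12)*c₂^2), ((1/12)*c₂^2), (0:ℝ), (0:ℝ), (0:ℝ)] := by
  rw [hE4dv]
  funext i
  fin_cases i
  · simp [M8, hA8, A8', b8, Matrix.mulVec, dotProduct, Fin.sum_univ_eight]
    all_goals linear_combination ((1/4)*c₂ + (-1/6)*c₂*c₃ + (-19/8)*c₂^2 + c₂^2*c₃ + (33/4)*c₂^3 + -1*c₂^3*c₃ + -12*c₂^4 + 6*c₂^5)*hr + ((1/6)*c₂ + (-19/16)*c₂^2 + (5/2)*c₂^3 + (-3/2)*c₂^4)*hc2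
  · simp [M8, hA8, A8', b8, Matrix.mulVec, dotProduct, Fin.sum_univ_eight]
    all_goals linear_combination ((1/6) + (-1/4)*c₃ + (1/6)*c₃^2 + (-51/16)*c₂ + (19/8)*c₂*c₃ + -1*c₂*c₃^2 + (91/4)*c₂^2 + (-33/4)*c₂^2*c₃ + c₂^2*c₃^2 + (-313/4)*c₂^3 + 12*c₂^3*c₃ + (273/2)*c₂^4 + -6*c₂^4*c₃ + -114*c₂^5 + 36*c₂^6)*hr + ((1/12) + (-169/96)*c₂ + (169/16)*c₂^2 + (-203/8)*c₂^3 + (51/2)*c₂^4 + -9*c₂^5)*hc2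
  · simp [M8, hA8, A8', b8, Matrix.mulVec, dotProduct, Fin.sum_univ_eight]
    all_goals linear_combination ((1/8) + (-1/12)*c₃ + (-27/16)*c₂ + (5/6)*c₂*c₃ + (71/8)*c₂^2 + (-5/2)*c₂^2*c₃ + (-45/2)*c₂^3 + 2*c₂^3*c₃ + 27*c₂^4 + -12*c₂^5)*hr + ((1/12) + (-89/96)*c₂ + (29/8)*c₂^2 + (-23/4)*c₂^3 + 3*c₂^4)*hc2
  · simp [M8, hA8, A8', b8, Matrix.mulVec, dotProduct, Fin.sum_univ_eight]
    all_goals linear_combination ((1/6) + (-1/2)*c₂ + (-1/3)*c₂*c₃ + -3*c₂^2 + 2*c₂^2*c₃ + 16*c₂^3 + -2*c₂^3*c₃ + -24*c₂^4 + 12*c₂^5)*hr + ((1/6) + (-1/4)*c₂ + (-9/4)*c₂^2 + 5*c₂^3 + -3*c₂^4)*hc2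
  · simp [M8, hA8, A8', b8, Matrix.mulVec, dotProduct, Fin.sum_univ_eight]
    all_goals linear_combination ((-1/12) + (7/12)*c₂ + (-1/12)*c₂*c₃ + (-5/2)*c₂^2 + (3/2)*c₂^2*c₃ + 11*c₂^3 + -2*c₂^3*c₃ + -21*c₂^4 + 12*c₂^5)*hr + ((-1/6) + (19/24)*c₂ + (-7/4)*c₂^2 + (17/4)*c₂^3 + -3*c₂^4)*hc2
  · simp [M8, hA8, A8', b8, Matrix.mulVec, dotProduct, Fin.sum_univ_eight]
    all_goals linear_combination ((1/24) + (-17/48)*c₂ + (7/8)*c₂^2 + (-1/2)*c₂^3)*hr + ((1/32)*c₂ + (-1/8)*c₂^2)*hc2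
  · simp [M8, hA8, A8', b8, Matrix.mulVec, dotProduct, Fin.sum_univ_eight]
    all_goals linear_combination ((1/16)*c₂ + (-1/8)*c₂*c₃ + (-3/4)*c₂^2 + (1/4)*c₂^2*c₃ + (9/4)*c₂^3 + (-3/2)*c₂^4)*hr + ((1/32)*c₂ + (-7/16)*c₂^2 + (3/8)*c₂^3)*hc2
  · simp [M8, hA8, A8', b8, Matrix.mulVec, dotProduct, Fin.sum_univ_eight]
    all_goals linear_combination ((1/12)*c₂ + (-3/8)*c₂^2 + (1/4)*c₂^3)*hr + ((1/16)*c₂^2)*hc2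

lemma dotaa : E4a ⬝ᵥ M8.mulVec E4a = 0 := by
  rw [hMV4a, hE4av]
  simp [dotProduct, Fin.sum_univ_eight]
  all_goals linear_combination (0:ℝ)*hr

lemma dotab : E4a ⬝ᵥ M8.mulVec E4b = 0 := by
  rw [hMV4b, hE4av]
  simp [dotProduct, Fin.sum_univ_eight]
  all_goals linear_combination (0:ℝ)*hr

lemma dotac : E4a ⬝ᵥ M8.mulVec E4c = 0 := by
  rw [hMV4c, hE4av]
  simp [dotProduct, Fin.sum_univ_eight]
  all_goals linear_combination (0:ℝ)*hr

lemma dotad : E4a ⬝ᵥ M8.mulVec E4d = 0 := by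
  rw [hMV4d, hE4av]
  simp [dotProduct, Fin.sum_univ_eight]
  all_goals linear_combination (0:ℝ)*hr

lemma dotba : E4b ⬝ᵥ M8.mulVec E4a = 0 := by
  rw [hMV4a, hE4bv]
  simp [dotProduct, Fin.sum_univ_eight]
  all_goals linear_combination (0:ℝ)*hr

lemma dotbb : E4b ⬝ᵥ M8.mulVec E4b = 0 := by
  rw [hMV4b, hE4bv]
  simp [dotProduct, Fin.sum_univ_eight]
  all_goals linear_combination (0:ℝ)*hr

lemma dotbc : E4b ⬝ᵥ M8.mulVec E4c = 0 := by
  rw [hMV4c, hE4bv]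
  simp [dotProduct, Fin.sum_univ_eight]
  all_goals linear_combination (0:ℝ)*hr

lemma dotbd : E4b ⬝ᵥ M8.mulVec E4d = 0 := by
  rw [hMV4d, hE4bv]
  simp [dotProduct, Fin.sum_univ_eight]
  all_goals linear_combination (0:ℝ)*hr

lemma dotca : E4c ⬝ᵥ M8.mulVec E4a = 0 := by
  rw [hMV4a, hE4cv]
  simp [dotProduct, Fin.sum_univ_eight]
  all_goals linear_combination (0:ℝ)*hr

lemma dotcb : E4c ⬝ᵥ M8.mulVec E4b = 0 := by
  rw [hMV4b, hE4cv]
  simp [dotProduct, Fin.sum_univ_eight]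
  all_goals linear_combination (0:ℝ)*hr

lemma dotcc : E4c ⬝ᵥ M8.mulVec E4c = 0 := by
  rw [hMV4c, hE4cv]
  simp [dotProduct, Fin.sum_univ_eight]
  all_goals linear_combination (0:ℝ)*hr

lemma dotcd : E4c ⬝ᵥ M8.mulVec E4d = 0 := by
  rw [hMV4d, hE4cv]
  simp [dotProduct, Fin.sum_univ_eight]
  all_goals linear_combination (0:ℝ)*hr

lemma dotda : E4d ⬝ᵥ M8.mulVec E4a = 0 := by
  rw [hMV4a, hE4dv]
  simp [dotProduct, Fin.sum_univ_eight]
  all_goals linear_combination (0:ℝ)*hr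

lemma dotdb : E4d ⬝ᵥ M8.mulVec E4b = 0 := by
  rw [hMV4b, hE4dv]
  simp [dotProduct, Fin.sum_univ_eight]
  all_goals linear_combination (0:ℝ)*hr

lemma dotdc : E4d ⬝ᵥ M8.mulVec E4c = 0 := by
  rw [hMV4c, hE4dv]
  simp [dotProduct, Fin.sum_univ_eight]
  all_goals linear_combination (0:ℝ)*hr

lemma dotdd : E4d ⬝ᵥ M8.mulVec E4d = 0 := by
  rw [hMV4d, hE4dv]
  simp [dotProduct, Fin.sum_univ_eight]
  all_goals linear_combination (0:ℝ)*hr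

/-! ### Trees -/

lemma order_node (ts : List RTree) : (RTree.node ts).order = 1 + (ts.map RTree.order).sum := by
  rw [RTree.order]
  exact congrArg (1 + ·) (congrArg List.sum (List.attach_map_val (l := ts) (f := RTree.order)))

lemma phi_node (ts : List RTree) :
    (RTree.node ts).phi = fun i => (ts.map (fun t => A8.mulVec t.phi i)).prod := by
  rw [RTree.phi]
  funext i
  exact congrArg List.prod (List.attach_map_val (l := ts) (f := fun t => A8.mulVec t.phi i))

lemma order_pos (t : RTree) : 1 ≤ t.order := by
  obtain ⟨ts⟩ := t; rw [order_node]; omega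

lemma Msymm (v w : Fin 8 → ℝ) : v ⬝ᵥ M8.mulVec w = w ⬝ᵥ M8.mulVec v := by
  simp only [M8, Matrix.mulVec, dotProduct, Fin.sum_univ_eight]
  ring

lemma classify : ∀ (n : ℕ) (t : RTree), t.order ≤ n →
    (t.order = 1 → t.phi = fun _ => 1) ∧ (t.order = 2 → t.phi = c8) ∧
    (t.order = 3 → t.phi = E3a ∨ t.phi = E3b) ∧
    (t.order = 4 → t.phi = E4a ∨ t.phi = E4b ∨ t.phi = E4c ∨ t.phi = E4d) := by
  intro n
  induction n with
  | zero => intro t h; have := order_pos t; omega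
  | succ n ih =>
    rintro ⟨ts⟩ h
    match ts with
    | [] =>
      refine ⟨fun _ => ?_, fun h2 => ?_, fun h3 => ?_, fun h4 => ?_⟩
      · rw [phi_node]; funext i; simp
      all_goals simp [order_node] at *
      all_goals omega
    | [a] =>
      have hao : a.order ≤ n := by
        have := order_node [a]; simp at this; omega
      have hord : (RTree.node [a]).order = 1 + a.order := by
        rw [order_node]; simp
      have hphi : (RTree.node [a]).phi = A8.mulVec a.phi := by
        rw [phi_node]; funext i; simp
      have ha1 := order_pos a
      refine ⟨fun h1 => ?_, fun h2 => ?_, fun h3 => ?_, fun h4 => ?_⟩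
      · omega
      · have : a.order = 1 := by omega
        rw [hphi, (ih a hao).1 this, hA1]
      · have : a.order = 2 := by omega
        right; rw [hphi, (ih a hao).2.1 this, E3b]
      · have : a.order = 3 := by omega
        rcases (ih a hao).2.2.1 this with h' | h'
        · right; right; left; rw [hphi, h', E4c]
        · right; right; right; rw [hphi, h', E4d]
    | [a, b] =>
      have hao : a.order ≤ n ∧ b.order ≤ n := by
        have := order_node [a, b]; simp at this
        have := order_pos a; have := order_pos b; omega
      have hord : (RTree.node [a, b]).order = 1 + (a.order + b.order) := by
        rw [order_node]; simp
      have hphi : (RTree.node [a, b]).phi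
          = fun i => A8.mulVec a.phi i * A8.mulVec b.phi i := by
        rw [phi_node]; funext i; simp
      have ha1 := order_pos a; have hb1 := order_pos b
      refine ⟨fun h1 => ?_, fun h2 => ?_, fun h3 => ?_, fun h4 => ?_⟩
      · omega
      · omega
      · left
        have hoa : a.order = 1 := by omega
        have hob : b.order = 1 := by omega
        rw [hphi, (ih a hao.1).1 hoa, (ih b hao.2).1 hob, hA1]
        funext i; rw [E3a]; try ring
      · right; left
        have : a.order = 1 ∧ b.order = 2 ∨ a.order = 2 ∧ b.order = 1 := by omega
        rcases this with ⟨hoa, hob⟩ | ⟨hoa, hob⟩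
        · rw [hphi, (ih a hao.1).1 hoa, (ih b hao.2).2.1 hob, hA1]
          funext i; rw [E4b]; try ring
        · rw [hphi, (ih a hao.1).2.1 hoa, (ih b hao.2).1 hob, hA1]
          funext i; rw [E4b]; try ring
    | [a, b, c] =>
      have hao : a.order ≤ n ∧ b.order ≤ n ∧ c.order ≤ n := by
        have := order_node [a, b, c]; simp at this
        have := order_pos a; have := order_pos b; have := order_pos c; omega
      have hord : (RTree.node [a, b, c]).order = 1 + (a.order + b.order + c.order) := by
        rw [order_node]; simp; omega
      have hphi : (RTree.node [a, b, c]).phi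
          = fun i => A8.mulVec a.phi i * (A8.mulVec b.phi i * A8.mulVec c.phi i) := by
        rw [phi_node]; funext i; simp; try ring
      have ha1 := order_pos a; have hb1 := order_pos b; have hc1 := order_pos c
      refine ⟨fun h1 => ?_, fun h2 => ?_, fun h3 => ?_, fun h4 => ?_⟩
      · omega
      · omega
      · omega
      · left
        have hoa : a.order = 1 := by omega
        have hob : b.order = 1 := by omega
        have hoc : c.order = 1 := by omega
        rw [hphi, (ih a hao.1).1 hoa, (ih b hao.2.1).1 hob, (ih c hao.2.2).1 hoc, hA1]
        funext i; rw [E4a]; try ring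
    | a :: b :: c :: d :: l =>
      have hord := order_node (a :: b :: c :: d :: l)
      simp at hord
      have ha1 := order_pos a; have hb1 := order_pos b
      have hc1 := order_pos c; have hd1 := order_pos d
      refine ⟨fun h1 => ?_, fun h2 => ?_, fun h3 => ?_, fun h4 => ?_⟩ <;> omega

lemma kill (t : RTree) (ht : t.order ≤ 3) : M8.mulVec t.phi = 0 := by
  have k := classify t.order t le_rfl
  have h1 := order_pos t
  interval_cases h : t.order
  · rw [k.1 rfl]; exact hM1
  · rw [k.2.1 rfl]; exact hMc
  · rcases k.2.2.1 rfl with h' | h' <;> rw [h']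
    · exact hMc2
    · exact hMAc

theorem eight_stage_pseudo_symplectic_order_eight :
    (∀ Φ ∈ ({(fun _ => 1), c8, (fun i => (c8 i)^2),
        A8.mulVec c8} : Set (Fin 8 → ℝ)), M8.mulVec Φ = 0) ∧
    ∀ t₁ t₂ : RTree, t₁.order + t₂.order ≤ 8 →
      t₁.phi ⬝ᵥ M8.mulVec t₂.phi = 0 := by
  constructor
  · rintro Φ hΦ
    simp only [Set.mem_insert_iff, Set.mem_singleton_iff] at hΦ
    rcases hΦ with rfl | rfl | rfl | rfl
    · exact hM1
    · exact hMc
    · exact hMc2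
    · exact hMAc
  · intro t₁ t₂ h
    have h1 := order_pos t₁
    have h2 := order_pos t₂
    by_cases hb2 : t₂.order ≤ 3
    · rw [kill t₂ hb2, dotProduct_zero]
    · by_cases hb1 : t₁.order ≤ 3
      · rw [Msymm, kill t₁ hb1, dotProduct_zero]
      · have e1 : t₁.order = 4 := by omega
        have e2 : t₂.order = 4 := by omega
        rcases (classify t₁.order t₁ le_rfl).2.2.2 e1 with p1 | p1 | p1 | p1 <;>
          rcases (classify t₂.order t₂ le_rfl).2.2.2 e2 with p2 | p2 | p2 | p2 <;>
            rw [p1, p2]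
        · exact dotaa
        · exact dotab
        · exact dotac
        · exact dotad
        · exact dotba
        · exact dotbb
        · exact dotbc
        · exact dotbd
        · exact dotca
        · exact dotcb
        · exact dotcc
        · exact dotcd
        · exact dotda
        · exact dotdb
        · exact dotdc
        · exact dotdd
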